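/- arXiv:2009.12294 — 3 statements merged into one kernel-verified Lean document; each statement's English description precedes it below -/
import Mathlib

section
/- Let P satisfy the discrete algebraic Riccati equation P = Q + AᵀPA − (AᵀPB)(R + BᵀPB)⁻¹(BᵀPA) with P, Q symmetric positive definite and R symmetric positive definite. Define W = Σ_{k=0}^{N−1} (Aᵏ)ᵀ Q Aᵏ + (Aᴺ)ᵀ P Aᴺ for N ≥ 1. Then W = P + Σ_{k=1}^{N} (Aᵏ)ᵀ P B (R + BᵀPB)⁻¹ Bᵀ P Aᵏ. In particular W ⪰ P ≻ 0. -/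
open Matrix

theorem stmt_2 {n m : ℕ}
    (A P Q : Matrix (Fin n) (Fin n) ℝ) (B : Matrix (Fin n) (Fin m) ℝ)
    (R : Matrix (Fin m) (Fin m) ℝ)
    (hP : P.PosDef) (hQ : Q.PosDef) (hR : R.PosDef)
    (hRic : P = Q + Aᵀ * P * A - (Aᵀ * P * B) * (R + Bᵀ * P * B)⁻¹ * (Bᵀ * P * A))
    (N : ℕ) (hN : 1 ≤ N)
    (W : Matrix (Fin n) (Fin n) ℝ)
    (hW : W = (∑ k ∈ Finset.range N, (A ^ k)ᵀ * Q * (A ^ k)) + (A ^ N)ᵀ * P * (A ^ N)) :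
    W = P + ∑ k ∈ Finset.Icc 1 N,
        (A ^ k)ᵀ * P * B * (R + Bᵀ * P * B)⁻¹ * Bᵀ * P * (A ^ k) ∧
    (W - P).PosSemidef ∧ P.PosDef := by
  set S := (R + Bᵀ * P * B)⁻¹ with hS
  have habs : ∀ PP QQ X T : Matrix (Fin n) (Fin n) ℝ, PP = QQ + X - T → QQ = PP - X + T := by
    intro PP QQ X T h; rw [h]; abel
  have hQeq : Q = P - Aᵀ * P * A + (Aᵀ * P * B) * S * (Bᵀ * P * A) := habs _ _ _ _ hRic
  have key : ∀ M : ℕ,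
      (∑ k ∈ Finset.range M, (A ^ k)ᵀ * Q * (A ^ k)) + (A ^ M)ᵀ * P * (A ^ M)
        = P + ∑ k ∈ Finset.Icc 1 M, (A ^ k)ᵀ * P * B * S * Bᵀ * P * (A ^ k) := by
    intro M
    induction M with
    | zero => simp
    | succ M ih =>
      rw [Finset.sum_range_succ, Finset.sum_Icc_succ_top (by omega : 1 ≤ M + 1)]
      have hcomm : A * A ^ M = A ^ M * A := (pow_succ' A M).symm.trans (pow_succ A M)
      have hcommT : Aᵀ * (A ^ M)ᵀ = (A ^ M)ᵀ * Aᵀ := by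
        rw [← transpose_mul, ← transpose_mul, hcomm]
      have this : (A ^ M)ᵀ * Q * (A ^ M) + (A ^ (M+1))ᵀ * P * (A ^ (M+1))
          = (A ^ M)ᵀ * P * (A ^ M)
            + (A ^ (M+1))ᵀ * P * B * S * Bᵀ * P * (A ^ (M+1)) := by
        rw [hQeq, pow_succ]
        simp only [transpose_mul, Matrix.mul_sub, Matrix.sub_mul, Matrix.mul_add,
          Matrix.add_mul, Matrix.mul_assoc, hcomm, hcommT]
        abel
      rw [add_assoc, this, ← add_assoc, ih, add_assoc]
  have hWeq : W = P + ∑ k ∈ Finset.Icc 1 N,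
      (A ^ k)ᵀ * P * B * S * Bᵀ * P * (A ^ k) := by rw [hW, key]
  refine ⟨hWeq, ?_, hP⟩
  have hSpd : ((R + Bᵀ * P * B)⁻¹).PosDef := by
    refine Matrix.PosDef.inv (hR.add_posSemidef ?_)
    have := hP.posSemidef.conjTranspose_mul_mul_same B
    simpa using this
  have hterm' : ∀ k : ℕ,
      ((A ^ k)ᵀ * P * B * S * Bᵀ * P * (A ^ k)).PosSemidef := by
    intro k
    have h := hSpd.posSemidef.mul_mul_conjTranspose_same ((A ^ k)ᵀ * P * B)
    have heq : ((A ^ k)ᵀ * P * B)ᴴ = Bᵀ * P * (A ^ k) := by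
      simp [conjTranspose_mul, ← conjTranspose_eq_transpose_of_trivial, hP.isHermitian.eq,
        Matrix.mul_assoc]
    rw [heq] at h
    simpa [hS, Matrix.mul_assoc] using h
  have hsum : (∑ k ∈ Finset.Icc 1 N,
      (A ^ k)ᵀ * P * B * S * Bᵀ * P * (A ^ k)).PosSemidef := by
    classical
    induction Finset.Icc 1 N using Finset.cons_induction with
    | empty => simpa using Matrix.PosSemidef.zero
    | cons a s ha ih =>
      rw [Finset.sum_cons]
      exact (hterm' a).add ih
  rw [hWeq]
  simpa using hsum
end

section
/- Let H be symmetric positive definite, G a matrix, Z nonempty closed convex, and for each x let S(x) be the unique point in Z satisfying 0 ∈ HS(x) + Gx + N_Z(S(x)). Then for all x, y: ⟨S(x) − S(y), G(x − y)⟩ ≤ −‖S(x) − S(y)‖_H², and consequently ‖S(x) − S(y)‖_H ≤ ‖G(x − y)‖_{H⁻¹}. -/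
open Matrix

theorem stmt_5 {p n : ℕ}
    (H : Matrix (Fin p) (Fin p) ℝ) (hH : H.PosDef)
    (G : Matrix (Fin p) (Fin n) ℝ)
    (Z : Set (Fin p → ℝ)) (hZne : Z.Nonempty) (hZc : IsClosed Z) (hZconv : Convex ℝ Z)
    (S : (Fin n → ℝ) → (Fin p → ℝ))
    (hSZ : ∀ x, S x ∈ Z)
    (hS : ∀ x, ∀ w ∈ Z, (-(H *ᵥ S x + G *ᵥ x)) ⬝ᵥ (w - S x) ≤ 0) :
    ∀ x y : Fin n → ℝ,
      (S x - S y) ⬝ᵥ (G *ᵥ (x - y)) ≤ -((S x - S y) ⬝ᵥ (H *ᵥ (S x - S y))) ∧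
      Real.sqrt ((S x - S y) ⬝ᵥ (H *ᵥ (S x - S y))) ≤
        Real.sqrt ((G *ᵥ (x - y)) ⬝ᵥ (H⁻¹ *ᵥ (G *ᵥ (x - y)))) := by
  intro x y
  have hHsym : Hᵀ = H := by
    ext i j
    have := congrFun (congrFun hH.1.eq i) j
    simpa using this
  have hcomm : ∀ v w : Fin p → ℝ, v ⬝ᵥ (H *ᵥ w) = w ⬝ᵥ (H *ᵥ v) := by
    intro v w
    rw [dotProduct_mulVec, ← mulVec_transpose, hHsym, dotProduct_comm]
  obtain ⟨a, ha⟩ : ∃ a', a' = S x - S y := ⟨_, rfl⟩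
  obtain ⟨u, hu⟩ : ∃ u', u' = G *ᵥ (x - y) := ⟨_, rfl⟩
  rw [← ha, ← hu]
  have h1 := hS x (S y) (hSZ y)
  have h2 := hS y (S x) (hSZ x)
  -- first part
  have key : a ⬝ᵥ u ≤ -(a ⬝ᵥ (H *ᵥ a)) := by
    have e1 : a ⬝ᵥ (H *ᵥ a) + a ⬝ᵥ u =
        (-(H *ᵥ S x + G *ᵥ x)) ⬝ᵥ (S y - S x) + (-(H *ᵥ S y + G *ᵥ y)) ⬝ᵥ (S x - S y) := by
      simp only [ha, hu, mulVec_sub, sub_dotProduct, dotProduct_sub, neg_dotProduct,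
        add_dotProduct, dotProduct_neg]
      rw [dotProduct_comm (H *ᵥ S x) (S y), dotProduct_comm (H *ᵥ S x) (S x),
        dotProduct_comm (H *ᵥ S y) (S x), dotProduct_comm (H *ᵥ S y) (S y),
        dotProduct_comm (G *ᵥ x) (S y), dotProduct_comm (G *ᵥ x) (S x),
        dotProduct_comm (G *ᵥ y) (S x), dotProduct_comm (G *ᵥ y) (S y),
        hcomm (S y) (S x)]
      ring
    linarith [h1, h2, e1.ge, e1.le]
  refine ⟨key, ?_⟩
  -- second part via Cauchy-Schwarz with square root of H
  have hps := hH.posSemidef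
  open scoped MatrixOrder in
  obtain ⟨B, hB⟩ : ∃ B', B' = CFC.sqrt H := ⟨_, rfl⟩
  open scoped MatrixOrder in
  have hBB : B * B = H := by rw [hB]; exact CFC.sqrt_mul_sqrt_self H hps.nonneg
  open scoped MatrixOrder in
  have hBsym : Bᵀ = B := by
    rw [hB]; ext i j
    have := congrFun (congrFun (CFC.sqrt_nonneg H).posSemidef.1.eq i) j
    simpa using this
  have hdetB : IsUnit B.det := by
    have hdetH : H.det ≠ 0 := ne_of_gt hH.det_pos
    rw [← hBB, det_mul] at hdetH
    exact isUnit_iff_ne_zero.mpr (left_ne_zero_of_mul hdetH)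
  have hHinv : H⁻¹ = B⁻¹ * B⁻¹ := by rw [← hBB, Matrix.mul_inv_rev]
  have hBinvB : B⁻¹ * B = 1 := nonsing_inv_mul B hdetB
  have hBinvsym : (B⁻¹)ᵀ = B⁻¹ := by rw [transpose_nonsing_inv, hBsym]
  obtain ⟨v, hv⟩ : ∃ v', v' = B *ᵥ a := ⟨_, rfl⟩
  obtain ⟨w, hw⟩ : ∃ w', w' = B⁻¹ *ᵥ u := ⟨_, rfl⟩
  have e2 : a ⬝ᵥ (H *ᵥ a) = v ⬝ᵥ v := by
    rw [hv, ← hBB, ← mulVec_mulVec, dotProduct_mulVec a, ← mulVec_transpose, hBsym]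
  have e3 : u ⬝ᵥ (H⁻¹ *ᵥ u) = w ⬝ᵥ w := by
    rw [hw, hHinv, ← mulVec_mulVec, dotProduct_mulVec u, ← mulVec_transpose, hBinvsym]
  have e4 : a ⬝ᵥ u = v ⬝ᵥ w := by
    rw [hv, hw, dotProduct_mulVec (B *ᵥ a), ← mulVec_transpose, hBinvsym, mulVec_mulVec,
      hBinvB, one_mulVec]
  have hcs : (v ⬝ᵥ w) ^ 2 ≤ (v ⬝ᵥ v) * (w ⬝ᵥ w) := by
    simpa [dotProduct, sq] using Finset.sum_mul_sq_le_sq_mul_sq Finset.univ v w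
  have hvv : (0:ℝ) ≤ v ⬝ᵥ v :=
    Finset.sum_nonneg fun i _ => mul_self_nonneg _
  have hww : (0:ℝ) ≤ w ⬝ᵥ w :=
    Finset.sum_nonneg fun i _ => mul_self_nonneg _
  rw [e2, e3]
  have hle : v ⬝ᵥ v ≤ Real.sqrt (v ⬝ᵥ v) * Real.sqrt (w ⬝ᵥ w) := by
    have h5 : v ⬝ᵥ v ≤ -(v ⬝ᵥ w) := by rw [← e2, ← e4]; linarith [key]
    have h6 : -(v ⬝ᵥ w) ≤ Real.sqrt (v ⬝ᵥ v) * Real.sqrt (w ⬝ᵥ w) := by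
      have h7 := Real.sqrt_le_sqrt hcs
      rw [Real.sqrt_sq_eq_abs, Real.sqrt_mul hvv] at h7
      exact (neg_le_abs _).trans h7
    linarith
  rcases eq_or_lt_of_le hvv with h0 | h0
  · rw [← h0, Real.sqrt_zero]
    exact Real.sqrt_nonneg _
  · have hs0 : 0 < Real.sqrt (v ⬝ᵥ v) := Real.sqrt_pos.mpr h0
    have hmul : Real.sqrt (v ⬝ᵥ v) * Real.sqrt (v ⬝ᵥ v) ≤
        Real.sqrt (v ⬝ᵥ v) * Real.sqrt (w ⬝ᵥ w) := by
      rw [Real.mul_self_sqrt hvv]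
      exact hle
    exact le_of_mul_le_mul_left hmul hs0
end

section
/- With H, W symmetric positive definite, G a matrix, Z closed convex and S the solution map satisfying ⟨S(x) − S(y), G(x − y)⟩ ≤ −‖S(x) − S(y)‖_H² for all x, y, define ψ(x) = √(S(x)ᵀHS(x) + 2S(x)ᵀGx + xᵀWx) (assumed well-defined, i.e., the radicand is nonnegative). Then ψ is Lipschitz with respect to the W-norm: |ψ(x) − ψ(y)| ≤ ‖x − y‖_W for all x, y. -/
open Matrix

lemma symmdot' {m : ℕ} (A : Matrix (Fin m) (Fin m) ℝ) (hA : Aᵀ = A) (v w : Fin m → ℝ) :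
    v ⬝ᵥ A *ᵥ w = w ⬝ᵥ A *ᵥ v := by
  nth_rewrite 1 [← hA]
  rw [dotProduct_mulVec, vecMul_transpose, dotProduct_comm]

lemma expandQ' {p n : ℕ} (H : Matrix (Fin p) (Fin p) ℝ) (hHs : Hᵀ = H)
    (W : Matrix (Fin n) (Fin n) ℝ) (hWs : Wᵀ = W)
    (G : Matrix (Fin p) (Fin n) ℝ)
    (z w : Fin p → ℝ) (x y : Fin n → ℝ) (t : ℝ) :
    (z + t • w) ⬝ᵥ (H *ᵥ (z + t • w)) + 2 * ((z + t • w) ⬝ᵥ (G *ᵥ (x + t • y)))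
        + (x + t • y) ⬝ᵥ (W *ᵥ (x + t • y))
      = (w ⬝ᵥ (H *ᵥ w) + 2 * (w ⬝ᵥ (G *ᵥ y)) + y ⬝ᵥ (W *ᵥ y)) * t ^ 2
        + (2 * (z ⬝ᵥ (H *ᵥ w) + z ⬝ᵥ (G *ᵥ y) + w ⬝ᵥ (G *ᵥ x) + x ⬝ᵥ (W *ᵥ y))) * t
        + (z ⬝ᵥ (H *ᵥ z) + 2 * (z ⬝ᵥ (G *ᵥ x)) + x ⬝ᵥ (W *ᵥ x)) := by
  have h1 := symmdot' H hHs w z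
  have h2 := symmdot' W hWs y x
  simp only [dotProduct_add, add_dotProduct, mulVec_add, mulVec_smul, smul_dotProduct,
    dotProduct_smul, smul_eq_mul]
  linear_combination t * h1 + t * h2

/-- Cauchy–Schwarz for the block quadratic form. -/
lemma csQ' {p n : ℕ} (H : Matrix (Fin p) (Fin p) ℝ) (hHs : Hᵀ = H)
    (W : Matrix (Fin n) (Fin n) ℝ) (hWs : Wᵀ = W)
    (G : Matrix (Fin p) (Fin n) ℝ)
    (hrad : ∀ z : Fin p → ℝ, ∀ x : Fin n → ℝ,
      0 ≤ z ⬝ᵥ (H *ᵥ z) + 2 * (z ⬝ᵥ (G *ᵥ x)) + x ⬝ᵥ (W *ᵥ x))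
    (z w : Fin p → ℝ) (x y : Fin n → ℝ) :
    z ⬝ᵥ (H *ᵥ w) + z ⬝ᵥ (G *ᵥ y) + w ⬝ᵥ (G *ᵥ x) + x ⬝ᵥ (W *ᵥ y)
      ≤ Real.sqrt (z ⬝ᵥ (H *ᵥ z) + 2 * (z ⬝ᵥ (G *ᵥ x)) + x ⬝ᵥ (W *ᵥ x))
        * Real.sqrt (w ⬝ᵥ (H *ᵥ w) + 2 * (w ⬝ᵥ (G *ᵥ y)) + y ⬝ᵥ (W *ᵥ y)) := by
  set a : ℝ := w ⬝ᵥ (H *ᵥ w) + 2 * (w ⬝ᵥ (G *ᵥ y)) + y ⬝ᵥ (W *ᵥ y) with ha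
  set c : ℝ := z ⬝ᵥ (H *ᵥ z) + 2 * (z ⬝ᵥ (G *ᵥ x)) + x ⬝ᵥ (W *ᵥ x) with hc
  set b : ℝ := 2 * (z ⬝ᵥ (H *ᵥ w) + z ⬝ᵥ (G *ᵥ y) + w ⬝ᵥ (G *ᵥ x) + x ⬝ᵥ (W *ᵥ y)) with hb
  have hd : discrim a b c ≤ 0 := by
    apply discrim_le_zero
    intro t
    have h := hrad (z + t • w) (x + t • y)
    rw [expandQ' H hHs W hWs G z w x y t] at h
    rw [ha, hb, hc, show t * t = t ^ 2 from (sq t).symm]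
    linarith
  rw [discrim] at hd
  have ha0 : (0:ℝ) ≤ a := hrad w y
  have hc0 : (0:ℝ) ≤ c := hrad z x
  have hB2 : (b / 2) ^ 2 ≤ c * a := by nlinarith
  have h1 : b / 2 ≤ Real.sqrt ((b / 2) ^ 2) := by
    rw [Real.sqrt_sq_eq_abs]; exact le_abs_self _
  have h2 : Real.sqrt ((b / 2) ^ 2) ≤ Real.sqrt (c * a) := Real.sqrt_le_sqrt hB2
  have h3 : Real.sqrt (c * a) = Real.sqrt c * Real.sqrt a := Real.sqrt_mul hc0 a
  have : b / 2 ≤ Real.sqrt c * Real.sqrt a := by rw [← h3]; linarith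
  rw [hb] at this
  linarith

theorem stmt_7 {p n : ℕ}
    (H : Matrix (Fin p) (Fin p) ℝ) (hH : H.PosDef)
    (W : Matrix (Fin n) (Fin n) ℝ) (hW : W.PosDef)
    (G : Matrix (Fin p) (Fin n) ℝ)
    (S : (Fin n → ℝ) → (Fin p → ℝ))
    (hcoco : ∀ x y : Fin n → ℝ,
      (S x - S y) ⬝ᵥ (G *ᵥ (x - y)) ≤ -((S x - S y) ⬝ᵥ (H *ᵥ (S x - S y))))
    (hrad : ∀ z : Fin p → ℝ, ∀ x : Fin n → ℝ,
      0 ≤ z ⬝ᵥ (H *ᵥ z) + 2 * (z ⬝ᵥ (G *ᵥ x)) + x ⬝ᵥ (W *ᵥ x))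
    (ψ : (Fin n → ℝ) → ℝ)
    (hψ : ∀ x, ψ x = Real.sqrt
      ((S x) ⬝ᵥ (H *ᵥ S x) + 2 * ((S x) ⬝ᵥ (G *ᵥ x)) + x ⬝ᵥ (W *ᵥ x))) :
    ∀ x y : Fin n → ℝ, |ψ x - ψ y| ≤ Real.sqrt ((x - y) ⬝ᵥ (W *ᵥ (x - y))) := by
  have hHs : Hᵀ = H := (by simpa using hH.1 : H.IsSymm)
  have hWs : Wᵀ = W := (by simpa using hW.1 : W.IsSymm)
  -- one-sided estimate
  have key : ∀ x y : Fin n → ℝ, ψ x - ψ y ≤ Real.sqrt ((x - y) ⬝ᵥ (W *ᵥ (x - y))) := by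
    intro x y
    set z : Fin p → ℝ := S y with hz
    set d : Fin p → ℝ := S x - S y with hd
    set u : Fin n → ℝ := x - y with hu
    -- radicand of the difference term is bounded by the W-quadratic form
    have hQdu : d ⬝ᵥ (H *ᵥ d) + 2 * (d ⬝ᵥ (G *ᵥ u)) + u ⬝ᵥ (W *ᵥ u)
        ≤ u ⬝ᵥ (W *ᵥ u) := by
      have h1 := hcoco x y
      have h2 : (0:ℝ) ≤ d ⬝ᵥ (H *ᵥ d) := by simpa using hH.posSemidef.dotProduct_mulVec_nonneg d
      rw [← hd, ← hu] at h1
      linarith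
    have hQdu0 : (0:ℝ) ≤ d ⬝ᵥ (H *ᵥ d) + 2 * (d ⬝ᵥ (G *ᵥ u)) + u ⬝ᵥ (W *ᵥ u) := hrad d u
    -- triangle inequality: ψ x ≤ ψ y + sqrt(Q d u)
    have hcs := csQ' H hHs W hWs G hrad z d y u
    have hQy0 : (0:ℝ) ≤ z ⬝ᵥ (H *ᵥ z) + 2 * (z ⬝ᵥ (G *ᵥ y)) + y ⬝ᵥ (W *ᵥ y) := hrad z y
    set Qy : ℝ := z ⬝ᵥ (H *ᵥ z) + 2 * (z ⬝ᵥ (G *ᵥ y)) + y ⬝ᵥ (W *ᵥ y) with hQy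
    set Qd : ℝ := d ⬝ᵥ (H *ᵥ d) + 2 * (d ⬝ᵥ (G *ᵥ u)) + u ⬝ᵥ (W *ᵥ u) with hQd
    have hx : S x = z + d := by rw [hz, hd]; abel
    have hxy : x = y + u := by rw [hu]; abel
    have hexp : (S x) ⬝ᵥ (H *ᵥ S x) + 2 * ((S x) ⬝ᵥ (G *ᵥ x)) + x ⬝ᵥ (W *ᵥ x)
        = Qy + 2 * (z ⬝ᵥ (H *ᵥ d) + z ⬝ᵥ (G *ᵥ u) + d ⬝ᵥ (G *ᵥ y) + y ⬝ᵥ (W *ᵥ u)) + Qd := by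
      rw [hx, hxy]
      have := expandQ' H hHs W hWs G z d y u 1
      simp only [one_smul, one_pow] at this
      rw [this, hQy, hQd]; ring
    have htri : ψ x ≤ ψ y + Real.sqrt Qd := by
      rw [hψ x, hψ y, hexp, ← hQy]
      have hsum : Qy + 2 * (z ⬝ᵥ (H *ᵥ d) + z ⬝ᵥ (G *ᵥ u) + d ⬝ᵥ (G *ᵥ y) + y ⬝ᵥ (W *ᵥ u)) + Qd
          ≤ (Real.sqrt Qy + Real.sqrt Qd) ^ 2 := by
        have hsy : Real.sqrt Qy ^ 2 = Qy := Real.sq_sqrt hQy0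
        have hsd : Real.sqrt Qd ^ 2 = Qd := Real.sq_sqrt hQdu0
        nlinarith [hcs]
      calc Real.sqrt (Qy + 2 * (z ⬝ᵥ (H *ᵥ d) + z ⬝ᵥ (G *ᵥ u) + d ⬝ᵥ (G *ᵥ y) + y ⬝ᵥ (W *ᵥ u)) + Qd)
          ≤ Real.sqrt ((Real.sqrt Qy + Real.sqrt Qd) ^ 2) := Real.sqrt_le_sqrt hsum
        _ = Real.sqrt Qy + Real.sqrt Qd := Real.sqrt_sq (by positivity)
    have hmon : Real.sqrt Qd ≤ Real.sqrt (u ⬝ᵥ (W *ᵥ u)) := Real.sqrt_le_sqrt hQdu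
    linarith
  intro x y
  rw [abs_sub_le_iff]
  constructor
  · exact key x y
  · have := key y x
    have hsw : (y - x) ⬝ᵥ (W *ᵥ (y - x)) = (x - y) ⬝ᵥ (W *ᵥ (x - y)) := by
      have : y - x = -(x - y) := by abel
      rw [this, mulVec_neg, neg_dotProduct, dotProduct_neg, neg_neg]
    rwa [hsw] at this
end
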